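/- Let η be a Borel measure on (0,∞) with η((u,∞)) < ∞ for every u > 0, let t > 0, and let φ : (0,∞) → [0,∞) be measurable. Suppose that ∫_0^∞ e^{−λu} η((u,∞)) du ≤ t φ(λ)/λ for every λ > 0. Then for every A > 0 one has (1 − e^{−1}) · η((A,∞)) ≤ t · ∫_0^{1/A} (φ(λ)/λ) dλ. -/

import Mathlib

open MeasureTheory

/-- Second step of the subordinator tail estimate (Lemma 2.1 of the paper):
integrating `e^{-λA}·A·η((A,∞)) ≤ ∫_0^A e^{-λu} η((u,∞)) du ≤ tφ(λ)/λ` over `λ ∈ (0,1/A)`. -/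
theorem stmt_2
    (η : Measure ℝ) (hfin : ∀ u : ℝ, 0 < u → η (Set.Ioi u) < ⊤)
    (t : ℝ) (ht : 0 < t)
    (φ : ℝ → ℝ) (hφmeas : Measurable φ) (hφ : ∀ l : ℝ, 0 < l → 0 ≤ φ l)
    (hyp : ∀ l : ℝ, 0 < l →
      ∫⁻ u in Set.Ioi (0:ℝ), ENNReal.ofReal (Real.exp (-l * u)) * η (Set.Ioi u)
        ≤ ENNReal.ofReal (t * φ l / l))
    (A : ℝ) (hA : 0 < A) :
    ENNReal.ofReal (1 - Real.exp (-1)) * η (Set.Ioi A)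
      ≤ ENNReal.ofReal t * ∫⁻ l in Set.Ioo (0:ℝ) A⁻¹, ENNReal.ofReal (φ l / l) := by
  have hη : Measurable fun u : ℝ => η (Set.Ioi u) :=
    Antitone.measurable (fun a b hab => measure_mono (Set.Ioi_subset_Ioi hab))
  -- pointwise key inequality
  have key : ∀ l ∈ Set.Ioo (0:ℝ) A⁻¹,
      ENNReal.ofReal (A * Real.exp (-l * A)) * η (Set.Ioi A)
        ≤ ENNReal.ofReal (t * φ l / l) := by
    intro l hl
    have hl0 : 0 < l := hl.1
    have h1 : ENNReal.ofReal (A * Real.exp (-l * A)) * η (Set.Ioi A)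
        = ∫⁻ _ in Set.Ioo (0:ℝ) A, ENNReal.ofReal (Real.exp (-l * A)) * η (Set.Ioi A) := by
      rw [setLIntegral_const, Real.volume_Ioo, sub_zero,
        ENNReal.ofReal_mul hA.le]
      ring
    rw [h1]
    calc ∫⁻ _ in Set.Ioo (0:ℝ) A, ENNReal.ofReal (Real.exp (-l * A)) * η (Set.Ioi A)
        ≤ ∫⁻ u in Set.Ioo (0:ℝ) A, ENNReal.ofReal (Real.exp (-l * u)) * η (Set.Ioi u) := by
          refine setLIntegral_mono' measurableSet_Ioo fun u hu => ?_
          exact mul_le_mul' (ENNReal.ofReal_le_ofReal (Real.exp_le_exp.2 (by nlinarith [hu.1, hu.2])))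
            (measure_mono (Set.Ioi_subset_Ioi hu.2.le))
      _ ≤ ∫⁻ u in Set.Ioi (0:ℝ), ENNReal.ofReal (Real.exp (-l * u)) * η (Set.Ioi u) :=
          lintegral_mono_set Set.Ioo_subset_Ioi_self
      _ ≤ ENNReal.ofReal (t * φ l / l) := hyp l hl0
  have main := setLIntegral_mono' (μ := volume) measurableSet_Ioo key
  -- compute LHS
  have hLHS : ∫⁻ l in Set.Ioo (0:ℝ) A⁻¹, ENNReal.ofReal (A * Real.exp (-l * A)) * η (Set.Ioi A)
      = ENNReal.ofReal (1 - Real.exp (-1)) * η (Set.Ioi A) := by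
    rw [lintegral_mul_const _ (by measurability)]
    congr 1
    have hint : IntegrableOn (fun l : ℝ => A * Real.exp (-l * A)) (Set.Ioo 0 A⁻¹) := by
      exact ((continuous_const.mul ((continuous_neg.mul continuous_const).rexp)).integrableOn_Icc
        (a := 0) (b := A⁻¹)).mono_set Set.Ioo_subset_Icc_self
    rw [← ofReal_integral_eq_lintegral_ofReal hint
      (Filter.Eventually.of_forall fun l => by positivity)]
    congr 1
    have h2 : ∫ l in Set.Ioo (0:ℝ) A⁻¹, A * Real.exp (-l * A)
        = ∫ l in (0:ℝ)..A⁻¹, A * Real.exp (-l * A) := by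
      rw [intervalIntegral.integral_of_le (by positivity), ← integral_Ioc_eq_integral_Ioo]
    rw [h2]
    have h3 : ∀ l : ℝ, A * Real.exp (-l * A) = A * Real.exp (-A * l) := by
      intro l; ring_nf
    simp_rw [h3]
    rw [intervalIntegral.integral_const_mul, intervalIntegral.integral_comp_mul_left
      (fun x => Real.exp x) (c := -A) (by linarith)]
    rw [integral_exp]
    have hAA : -A * A⁻¹ = -1 := by field_simp
    have hA0 : -A * 0 = 0 := by ring
    rw [hAA, hA0, Real.exp_zero, smul_eq_mul]
    field_simp
    ring
  -- compute RHS
  have hRHS : ∫⁻ l in Set.Ioo (0:ℝ) A⁻¹, ENNReal.ofReal (t * φ l / l)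
      = ENNReal.ofReal t * ∫⁻ l in Set.Ioo (0:ℝ) A⁻¹, ENNReal.ofReal (φ l / l) := by
    rw [← lintegral_const_mul _ (show Measurable fun l : ℝ => ENNReal.ofReal (φ l / l) from (hφmeas.div measurable_id).ennreal_ofReal)]
    refine setLIntegral_congr_fun measurableSet_Ioo (fun l _ => ?_)
    rw [mul_div_assoc, ENNReal.ofReal_mul ht.le]
  rw [hLHS, hRHS] at main
  exact main
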